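/- If f and g are strongly quasisymmetric homeomorphisms of ℝ onto itself, then the composition g∘f is also strongly quasisymmetric: g∘f is an increasing homeomorphism of ℝ, it is locally absolutely continuous with (g∘f)′ = (g′∘f)·f′ almost everywhere, and (g′∘f)·f′ is an A_∞-weight. -/

import Mathlib

open MeasureTheory Set Filter Topology
open scoped ENNReal NNReal

noncomputable section

/-- The average of `u` over the interval from `a` to `b`. -/
noncomputable def intervalAvg {E : Type*} [NormedAddCommGroup E] [NormedSpace ℝ E]
    (u : ℝ → E) (a b : ℝ) : E :=
  (b - a)⁻¹ • ∫ x in a..b, u x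

/-- The BMO seminorm `‖u‖_* = sup_I (1/|I|) ∫_I ‖u - u_I‖`, valued in `ℝ≥0∞`. -/
noncomputable def bmoSeminorm {E : Type*} [NormedAddCommGroup E] [NormedSpace ℝ E]
    (u : ℝ → E) : ℝ≥0∞ :=
  ⨆ (a : ℝ) (b : ℝ) (_ : a < b),
    ENNReal.ofReal ((b - a)⁻¹ * ∫ x in a..b, ‖u x - intervalAvg u a b‖)

/-- `u` is a BMO function: locally integrable with finite BMO seminorm. -/
def IsBMO {E : Type*} [NormedAddCommGroup E] [NormedSpace ℝ E] (u : ℝ → E) : Prop :=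
  LocallyIntegrable u volume ∧ bmoSeminorm u < ⊤

/-- `ω` is an `A_p`-weight of Muckenhoupt on `ℝ` (`p > 1`). -/
def IsApWeight (ω : ℝ → ℝ) (p : ℝ) : Prop :=
  (∀ x, 0 ≤ ω x) ∧ LocallyIntegrable ω volume ∧
    LocallyIntegrable (fun x => (1 / ω x) ^ (1 / (p - 1))) volume ∧
    ∃ C : ℝ, 1 ≤ C ∧ ∀ a b : ℝ, a < b →
      ((b - a)⁻¹ * ∫ x in a..b, ω x) *
        ((b - a)⁻¹ * ∫ x in a..b, (1 / ω x) ^ (1 / (p - 1))) ^ (p - 1) ≤ C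

/-- `ω` is an `A_∞`-weight: an `A_p`-weight for some `p > 1`. -/
def IsAInftyWeight (ω : ℝ → ℝ) : Prop :=
  ∃ p : ℝ, 1 < p ∧ IsApWeight ω p

/-- `ω` is an `A_1`-weight of Muckenhoupt on `ℝ`. -/
def IsA1Weight (ω : ℝ → ℝ) : Prop :=
  (∀ x, 0 ≤ ω x) ∧ LocallyIntegrable ω volume ∧
    ∃ C : ℝ, 1 ≤ C ∧ ∀ a b : ℝ, a < b →
      (b - a)⁻¹ * ∫ x in a..b, ω x ≤ C * essInf ω (volume.restrict (Set.Ioo a b))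

/-- `f` is locally absolutely continuous with derivative `f'`. -/
def IsLocAC {E : Type*} [NormedAddCommGroup E] [NormedSpace ℝ E] (f f' : ℝ → E) : Prop :=
  LocallyIntegrable f' volume ∧ ∀ a b : ℝ, a < b → f b - f a = ∫ t in a..b, f' t

/-- `f` is a strongly quasisymmetric homeomorphism of `ℝ` with derivative `f'`:
an increasing homeomorphism of `ℝ` onto itself, locally absolutely continuous,
whose derivative is an `A_∞`-weight. -/
def IsSQSWith (f f' : ℝ → ℝ) : Prop :=
  StrictMono f ∧ Function.Surjective f ∧ IsLocAC f f' ∧ IsAInftyWeight f'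

/-- `f` is a strongly quasisymmetric homeomorphism of `ℝ` onto itself. -/
def IsSQS (f : ℝ → ℝ) : Prop :=
  ∃ f', IsSQSWith f f'

/-- `γ_u(x) = ∫_0^x e^{u(t)} dt`. -/
noncomputable def gammaOf (u : ℝ → ℝ) (x : ℝ) : ℝ :=
  ∫ t in (0:ℝ)..x, Real.exp (u t)

end
section AuxSQS

open MeasureTheory Set Filter Topology
open scoped ENNReal NNReal

namespace SQSAux

variable {f f₁ : ℝ → ℝ}

noncomputable def myE (hm : StrictMono f) (hs : Function.Surjective f) : ℝ ≃o ℝ :=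
  StrictMono.orderIsoOfSurjective f hm hs

lemma myE_apply (hm : StrictMono f) (hs : Function.Surjective f) (x : ℝ) :
    myE hm hs x = f x := rfl

lemma myE_symm_preimage_Ioc (hm : StrictMono f) (hs : Function.Surjective f) (a b : ℝ) :
    (myE hm hs).symm ⁻¹' Ioc a b = Ioc (f a) (f b) := by
  ext y
  simp only [mem_preimage, mem_Ioc]
  rw [← myE_apply hm hs a, ← myE_apply hm hs b]
  constructor
  · rintro ⟨h1, h2⟩
    exact ⟨by simpa using (myE hm hs).lt_iff_lt.mpr h1, by simpa using (myE hm hs).le_iff_le.mpr h2⟩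
  · rintro ⟨h1, h2⟩
    exact ⟨(myE hm hs).lt_iff_lt.mp (by simpa using h1),
      (myE hm hs).le_iff_le.mp (by simpa using h2)⟩

lemma f_continuous (hm : StrictMono f) (hs : Function.Surjective f) : Continuous f :=
  OrderIso.continuous (myE hm hs)

lemma f_measurable (hm : StrictMono f) (hs : Function.Surjective f) : Measurable f :=
  (f_continuous hm hs).measurable

lemma f_image_eq (hm : StrictMono f) (hs : Function.Surjective f) (S : Set ℝ) :
    f '' S = (myE hm hs).symm ⁻¹' S := by
  ext y
  constructor
  · rintro ⟨x, hx, rfl⟩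
    show (myE hm hs).symm (f x) ∈ S
    rw [← myE_apply hm hs x, (myE hm hs).symm_apply_apply x]
    exact hx
  · intro h
    exact ⟨(myE hm hs).symm y, h, (myE hm hs).apply_symm_apply y⟩

lemma f_image_Ioc (hm : StrictMono f) (hs : Function.Surjective f) (a b : ℝ) :
    f '' Ioc a b = Ioc (f a) (f b) := by
  rw [f_image_eq hm hs, myE_symm_preimage_Ioc hm hs]

lemma lint_Ioc_of_ftc (h0 : ∀ x, 0 ≤ f₁ x)
    (hli : ∀ a b : ℝ, IntegrableOn f₁ (Ioc a b) volume)
    (hftc : ∀ a b : ℝ, a < b → f b - f a = ∫ t in a..b, f₁ t) {a b : ℝ} (hab : a < b) :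
    ∫⁻ t in Ioc a b, ENNReal.ofReal (f₁ t) = ENNReal.ofReal (f b - f a) := by
  rw [hftc a b hab, intervalIntegral.integral_of_le hab.le,
    ← ofReal_integral_eq_lintegral_ofReal (hli a b) (Filter.Eventually.of_forall fun x => h0 x)]

lemma withDensity_eq_map (hm : StrictMono f) (hs : Function.Surjective f)
    (hf₁ : Measurable f₁) (h0 : ∀ x, 0 ≤ f₁ x)
    (hli : ∀ a b : ℝ, IntegrableOn f₁ (Ioc a b) volume)
    (hftc : ∀ a b : ℝ, a < b → f b - f a = ∫ t in a..b, f₁ t) :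
    volume.withDensity (fun t => ENNReal.ofReal (f₁ t))
      = Measure.map (myE hm hs).symm volume := by
  refine Measure.ext_of_Ioc' _ _ (fun a b hab => ?_) (fun a b hab => ?_)
  · rw [withDensity_apply _ measurableSet_Ioc, lint_Ioc_of_ftc h0 hli hftc hab]
    exact ENNReal.ofReal_ne_top
  · rw [withDensity_apply _ measurableSet_Ioc, lint_Ioc_of_ftc h0 hli hftc hab,
      Measure.map_apply (OrderIso.continuous (myE hm hs).symm).measurable measurableSet_Ioc,
      myE_symm_preimage_Ioc hm hs, Real.volume_Ioc]

/-- Change of variables for the lower Lebesgue integral under a strictly monotone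
surjection which is locally absolutely continuous with nonnegative derivative. -/
lemma cov_lintegral (hm : StrictMono f) (hs : Function.Surjective f)
    (hf₁ : Measurable f₁) (h0 : ∀ x, 0 ≤ f₁ x)
    (hli : ∀ a b : ℝ, IntegrableOn f₁ (Ioc a b) volume)
    (hftc : ∀ a b : ℝ, a < b → f b - f a = ∫ t in a..b, f₁ t)
    {k : ℝ → ℝ≥0∞} (hk : Measurable k) {S : Set ℝ} (hS : MeasurableSet S) :
    ∫⁻ t in S, ENNReal.ofReal (f₁ t) * k (f t) = ∫⁻ y in f '' S, k y := by
  have hfm : Measurable f := f_measurable hm hs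
  have h1 : ∫⁻ t in S, ENNReal.ofReal (f₁ t) * k (f t)
      = ∫⁻ t, k (f t) ∂((volume.withDensity (fun t => ENNReal.ofReal (f₁ t))).restrict S) := by
    rw [restrict_withDensity hS]
    exact (lintegral_withDensity_eq_lintegral_mul _ (hf₁.ennreal_ofReal) (hk.comp hfm)).symm
  have h2 : ∫⁻ t, k (f t)
        ∂(Measure.map (⇑(myE hm hs).symm) volume).restrict S
      = ∫⁻ y in (myE hm hs).symm ⁻¹' S, k (f ((myE hm hs).symm y)) := by
    rw [Measure.restrict_map (OrderIso.continuous (myE hm hs).symm).measurable hS]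
    exact lintegral_map (hk.comp hfm) (OrderIso.continuous (myE hm hs).symm).measurable
  rw [h1, withDensity_eq_map hm hs hf₁ h0 hli hftc, h2, ← f_image_eq hm hs]
  refine setLIntegral_congr_fun ((f_image_eq hm hs S) ▸
    (OrderIso.continuous (myE hm hs).symm).measurable hS : MeasurableSet (f '' S)) ?_
  intro y _
  dsimp only
  have hy : f ((myE hm hs).symm y) = y := (myE hm hs).apply_symm_apply y
  rw [hy]

lemma keyid {sf sg s : ℝ} (hsf : 0 < sf) (hsg : 0 < sg)
    (hs : s * (1 + sf + sg) = sf * sg) (u v : ℝ) (hu : 0 ≤ u) (hv : 0 ≤ v) :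
    (1 / (u * v)) ^ s = ((1 / u) ^ sg * v) ^ (s / sg) * ((1 / v) ^ sf) ^ (1 - s / sg) := by
  have hd : (0:ℝ) < 1 + sf + sg := by linarith
  have hspos : 0 < s := by
    have : s = sf * sg / (1 + sf + sg) := by field_simp at hs ⊢; linarith [hs]
    rw [this]; positivity
  have hasg : 0 < s / sg := div_pos hspos hsg
  rcases eq_or_lt_of_le hu with hu0 | hu0
  · rw [← hu0, zero_mul, div_zero, Real.zero_rpow hspos.ne', Real.zero_rpow hsg.ne',
      zero_mul, Real.zero_rpow hasg.ne', zero_mul]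
  rcases eq_or_lt_of_le hv with hv0 | hv0
  · rw [← hv0, mul_zero, div_zero, Real.zero_rpow hspos.ne', mul_zero,
      Real.zero_rpow hasg.ne', zero_mul]
  have huv : 0 < u * v := mul_pos hu0 hv0
  rw [one_div, one_div, one_div, Real.rpow_def_of_pos (inv_pos.mpr huv),
    Real.rpow_def_of_pos (by positivity : (0:ℝ) < u⁻¹ ^ sg * v),
    Real.rpow_def_of_pos (by positivity : (0:ℝ) < v⁻¹ ^ sf), ← Real.exp_add]
  congr 1
  rw [Real.log_inv, Real.log_mul hu0.ne' hv0.ne',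
    Real.log_mul (by positivity : u⁻¹ ^ sg ≠ 0) hv0.ne',
    Real.log_rpow (inv_pos.mpr hu0), Real.log_rpow (inv_pos.mpr hv0),
    Real.log_inv, Real.log_inv]
  have hsg' : sg ≠ 0 := hsg.ne'
  field_simp
  linear_combination (-(Real.log v)) * hs

lemma final_alg {sf sg s Cf Cg L M x1 y1 y2 Sig : ℝ}
    (hsf : 0 < sf) (hsg : 0 < sg) (hs : s * (1 + sf + sg) = sf * sg)
    (hL : 0 < L) (hM : 0 < M) (hx1 : 0 ≤ x1) (hy1 : 0 ≤ y1) (hy2 : 0 ≤ y2)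
    (hSig0 : 0 ≤ Sig) (hSig : Sig ≤ y1 ^ (s / sg) * y2 ^ (1 - s / sg))
    (hCf : 1 ≤ Cf) (hCg : 1 ≤ Cg)
    (Hg : (M⁻¹ * x1) * (M⁻¹ * y1) ^ (1 / sg) ≤ Cg)
    (Hf : (L⁻¹ * M) * (L⁻¹ * y2) ^ (1 / sf) ≤ Cf) :
    (L⁻¹ * x1) * (L⁻¹ * Sig) ^ (1 / s) ≤ Cg * Cf ^ (1 + 1 / sg) := by
  have hd : (0:ℝ) < 1 + sf + sg := by linarith
  have hsval : s = sf * sg / (1 + sf + sg) := by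
    field_simp at hs ⊢; linarith [hs]
  have hspos : 0 < s := by rw [hsval]; positivity
  have haslt : s / sg < 1 := by
    rw [div_lt_one hsg, hsval, div_lt_iff₀ hd]; nlinarith
  have hasg : 0 < s / sg := div_pos hspos hsg
  have hCf0 : (0:ℝ) < Cf := lt_of_lt_of_le one_pos hCf
  have hCg0 : (0:ℝ) < Cg := lt_of_lt_of_le one_pos hCg
  have hRHS : (0:ℝ) ≤ Cg * Cf ^ (1 + 1 / sg) := by positivity
  rcases eq_or_lt_of_le hx1 with hx0 | hx0
  · rw [← hx0, mul_zero, zero_mul]; exact hRHS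
  rcases eq_or_lt_of_le hy1 with hy0 | hy0
  · have : Sig = 0 := le_antisymm (by
      rw [← hy0, Real.zero_rpow hasg.ne', zero_mul] at hSig; exact hSig) hSig0
    rw [this, mul_zero, Real.zero_rpow (by positivity : (1:ℝ)/s ≠ 0), mul_zero]
    exact hRHS
  rcases eq_or_lt_of_le hy2 with hy0' | hy0'
  · have : Sig = 0 := le_antisymm (by
      rw [← hy0', Real.zero_rpow (by linarith : (1:ℝ) - s / sg ≠ 0), mul_zero] at hSig
      exact hSig) hSig0
    rw [this, mul_zero, Real.zero_rpow (by positivity : (1:ℝ)/s ≠ 0), mul_zero]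
    exact hRHS
  set W : ℝ := y1 ^ (s / sg) * y2 ^ (1 - s / sg) with hW
  have hWpos : 0 < W := by rw [hW]; positivity
  have step1 : (L⁻¹ * x1) * (L⁻¹ * Sig) ^ (1 / s) ≤ (L⁻¹ * x1) * (L⁻¹ * W) ^ (1 / s) := by
    apply mul_le_mul_of_nonneg_left _ (by positivity)
    exact Real.rpow_le_rpow (by positivity) (mul_le_mul_of_nonneg_left hSig (by positivity))
      (by positivity)
  have E : (L⁻¹ * x1) * (L⁻¹ * W) ^ (1 / s)
      = ((M⁻¹ * x1) * (M⁻¹ * y1) ^ (1 / sg))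
        * (((L⁻¹ * M) * (L⁻¹ * y2) ^ (1 / sf)) ^ (1 + 1 / sg)) := by
    have hA : (0:ℝ) < (L⁻¹ * x1) * (L⁻¹ * W) ^ (1 / s) := by positivity
    have hB : (0:ℝ) < ((M⁻¹ * x1) * (M⁻¹ * y1) ^ (1 / sg))
        * (((L⁻¹ * M) * (L⁻¹ * y2) ^ (1 / sf)) ^ (1 + 1 / sg)) := by positivity
    have lw : Real.log W = (s/sg) * Real.log y1 + (1 - s/sg) * Real.log y2 := by
      rw [hW, Real.log_mul (by positivity) (by positivity), Real.log_rpow hy0,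
        Real.log_rpow hy0']
    have lLW : Real.log (L⁻¹ * W)
        = -Real.log L + ((s/sg) * Real.log y1 + (1 - s/sg) * Real.log y2) := by
      rw [Real.log_mul (by positivity) (by positivity), Real.log_inv, lw]
    have lA : Real.log (L⁻¹ * x1 * (L⁻¹ * W) ^ (1/s))
        = (-Real.log L + Real.log x1)
          + (1/s) * (-Real.log L + ((s/sg) * Real.log y1 + (1 - s/sg) * Real.log y2)) := by
      rw [Real.log_mul (by positivity) (by positivity),
        Real.log_mul (by positivity) (by positivity), Real.log_rpow (by positivity),
        Real.log_inv, lLW]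
    have lin : Real.log (L⁻¹ * M * (L⁻¹ * y2) ^ (1/sf))
        = (-Real.log L + Real.log M) + (1/sf) * (-Real.log L + Real.log y2) := by
      rw [Real.log_mul (by positivity) (by positivity),
        Real.log_mul (by positivity) (by positivity), Real.log_rpow (by positivity),
        Real.log_mul (by positivity) (by positivity), Real.log_inv]
    have lB : Real.log (M⁻¹ * x1 * (M⁻¹ * y1) ^ (1/sg)
          * (L⁻¹ * M * (L⁻¹ * y2) ^ (1/sf)) ^ (1 + 1/sg))
        = ((-Real.log M + Real.log x1) + (1/sg) * (-Real.log M + Real.log y1))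
          + (1 + 1/sg) * ((-Real.log L + Real.log M) + (1/sf) * (-Real.log L + Real.log y2)) := by
      rw [Real.log_mul (by positivity) (by positivity),
        Real.log_mul (by positivity) (by positivity),
        Real.log_rpow (by positivity), Real.log_rpow (by positivity), lin,
        Real.log_mul (by positivity) (by positivity),
        Real.log_mul (by positivity) (by positivity), Real.log_inv]
    rw [← Real.exp_log hA, ← Real.exp_log hB, lA, lB]
    congr 1
    rw [hsval]
    field_simp
    ring
  calc (L⁻¹ * x1) * (L⁻¹ * Sig) ^ (1 / s)
      ≤ (L⁻¹ * x1) * (L⁻¹ * W) ^ (1 / s) := step1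
    _ = ((M⁻¹ * x1) * (M⁻¹ * y1) ^ (1 / sg))
        * (((L⁻¹ * M) * (L⁻¹ * y2) ^ (1 / sf)) ^ (1 + 1 / sg)) := E
    _ ≤ Cg * (((L⁻¹ * M) * (L⁻¹ * y2) ^ (1 / sf)) ^ (1 + 1 / sg)) := by
        apply mul_le_mul_of_nonneg_right Hg (by positivity)
    _ ≤ Cg * Cf ^ (1 + 1 / sg) := by
        apply mul_le_mul_of_nonneg_left _ hCg0.le
        exact Real.rpow_le_rpow (by positivity) Hf (by positivity)

lemma holder_bound (μ : Measure ℝ) {F G : ℝ → ℝ≥0∞} (hF : AEMeasurable F μ)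
    (hG : AEMeasurable G μ) {a : ℝ} (ha0 : 0 < a) (ha1 : a < 1) :
    ∫⁻ x, F x ^ a * G x ^ (1 - a) ∂μ
      ≤ (∫⁻ x, F x ∂μ) ^ a * (∫⁻ x, G x ∂μ) ^ (1 - a) := by
  have h1a : (0:ℝ) < 1 - a := by linarith
  have hpq : (1/a).HolderConjugate (1/(1-a)) := by
    rw [Real.holderConjugate_iff_eq_conjExponent (by rw [lt_div_iff₀ ha0]; linarith)]
    field_simp
  have key : ∫⁻ x, (fun x => F x ^ a) x * (fun x => G x ^ (1-a)) x ∂μ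
      ≤ (∫⁻ x, (F x ^ a) ^ (1/a) ∂μ) ^ (1/(1/a))
        * (∫⁻ x, (G x ^ (1-a)) ^ (1/(1-a)) ∂μ) ^ (1/(1/(1-a))) :=
    ENNReal.lintegral_mul_le_Lp_mul_Lq μ hpq (hF.pow_const a) (hG.pow_const (1-a))
  simp only [← ENNReal.rpow_mul, mul_one_div_cancel ha0.ne', mul_one_div_cancel h1a.ne',
    ENNReal.rpow_one, one_div_one_div] at key
  exact key

lemma integrableOn_Ioc_of_lint {h : ℝ → ℝ} (hm : Measurable h) (hnn : ∀ x, 0 ≤ h x)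
    {a b : ℝ} (hfin : ∫⁻ x in Ioc a b, ENNReal.ofReal (h x) < ⊤) :
    IntegrableOn h (Ioc a b) volume :=
  ⟨hm.aestronglyMeasurable, (hasFiniteIntegral_iff_ofReal (ae_of_all _ hnn)).mpr hfin⟩

lemma lint_Ioc_lt_top {h h₁ : ℝ → ℝ} (hli : LocallyIntegrable h volume)
    (hae : h =ᵐ[volume] h₁) (hnn : ∀ x, 0 ≤ h₁ x) (a b : ℝ) :
    ∫⁻ x in Ioc a b, ENNReal.ofReal (h₁ x) < ⊤ := by
  have hint : IntegrableOn h₁ (Ioc a b) volume :=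
    ((hli.integrableOn_isCompact isCompact_Icc).mono_set
      Ioc_subset_Icc_self).congr_fun_ae (ae_restrict_of_ae hae)
  exact (hasFiniteIntegral_iff_ofReal (ae_of_all _ hnn)).mp hint.2

lemma interval_eq_toReal {h : ℝ → ℝ} (hnn : ∀ x, 0 ≤ h x)
    (hm : AEStronglyMeasurable h volume) {a b : ℝ} (hab : a ≤ b) :
    ∫ x in a..b, h x = (∫⁻ x in Ioc a b, ENNReal.ofReal (h x)).toReal := by
  rw [intervalIntegral.integral_of_le hab]
  exact integral_eq_lintegral_of_nonneg_ae (ae_of_all _ hnn) hm.restrict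

lemma locallyIntegrable_of_integrableOn_Ioc {h h₁ : ℝ → ℝ} (hae : h =ᵐ[volume] h₁)
    (hint : ∀ a b : ℝ, IntegrableOn h₁ (Ioc a b) volume) : LocallyIntegrable h volume := by
  rw [locallyIntegrable_iff]
  intro K hK
  rcases K.eq_empty_or_nonempty with rfl | hne
  · exact integrableOn_empty
  · have h1 : K ⊆ Icc (sInf K) (sSup K) := hK.isBounded.subset_Icc_sInf_sSup
    have h2 : K ⊆ Ioc (sInf K - 1) (sSup K) :=
      h1.trans (fun x hx => ⟨by linarith [hx.1], hx.2⟩)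
    exact ((hint _ _).congr_fun_ae (ae_restrict_of_ae hae.symm)).mono_set h2

end SQSAux
end AuxSQS

open MeasureTheory Set Filter Topology
open scoped ENNReal NNReal

/-- the composition of strongly quasisymmetric homeomorphisms of `ℝ`
is strongly quasisymmetric, with derivative `(g'∘f)·f'` (an `A_∞`-weight). -/
theorem statement4 (f f' g g' : ℝ → ℝ) (hf : IsSQSWith f f') (hg : IsSQSWith g g') :
    StrictMono (fun x => g (f x)) ∧ Function.Surjective (fun x => g (f x)) ∧
    IsLocAC (fun x => g (f x)) (fun x => g' (f x) * f' x) ∧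
    IsAInftyWeight (fun x => g' (f x) * f' x) := by
  classical
  obtain ⟨hfm, hfs, ⟨hf'li, hfFTC⟩, pf, hpf, hf'nn, hf'li2, hfσli, Cf, hCf, hAf⟩ := hf
  obtain ⟨hgm, hgs, ⟨hg'li, hgFTC⟩, pg, hpg, hg'nn, hg'li2, hgσli, Cg, hCg, hAg⟩ := hg
  set sf := 1 / (pf - 1) with hsfdef
  set sg := 1 / (pg - 1) with hsgdef
  have hsf : 0 < sf := by rw [hsfdef]; exact one_div_pos.mpr (by linarith)
  have hsg : 0 < sg := by rw [hsgdef]; exact one_div_pos.mpr (by linarith)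
  have hpf1' : pf - 1 = 1 / sf := by rw [hsfdef, one_div_one_div]
  have hpg1' : pg - 1 = 1 / sg := by rw [hsgdef, one_div_one_div]
  have hd : (0:ℝ) < 1 + sf + sg := by linarith
  set s := sf * sg / (1 + sf + sg) with hsdef
  have hss : s * (1 + sf + sg) = sf * sg := by rw [hsdef]; field_simp
  have hspos : 0 < s := by rw [hsdef]; positivity
  have hslt : s / sg < 1 := by rw [div_lt_one hsg, hsdef, div_lt_iff₀ hd]; nlinarith
  have hasg : 0 < s / sg := div_pos hspos hsg
  set p := 1 + 1 / s with hpdef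
  have hp1 : 1 < p := by
    rw [hpdef]; have : 0 < 1/s := by positivity
    linarith
  have hp1' : p - 1 = 1 / s := by rw [hpdef, add_sub_cancel_left]
  have hps : 1 / (p - 1) = s := by rw [hp1', one_div_one_div]
  have hfmeas : Measurable f := SQSAux.f_measurable hfm hfs
  -- measurable nonnegative representatives of f' and g'
  have hf'sm := hf'li.aestronglyMeasurable
  set f₁ : ℝ → ℝ := fun x => max (hf'sm.mk f' x) 0 with hf₁def
  have hf₁meas : Measurable f₁ := (hf'sm.stronglyMeasurable_mk.measurable).max measurable_const
  have hf₁nn : ∀ x, 0 ≤ f₁ x := fun x => le_max_right _ _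
  have hf'f₁ : f' =ᵐ[volume] f₁ := by
    filter_upwards [hf'sm.ae_eq_mk] with x hx
    have : f₁ x = max (hf'sm.mk f' x) 0 := rfl
    rw [this, ← hx, max_eq_left (hf'nn x)]
  have hg'sm := hg'li.aestronglyMeasurable
  set g₁ : ℝ → ℝ := fun x => max (hg'sm.mk g' x) 0 with hg₁def
  have hg₁meas : Measurable g₁ := (hg'sm.stronglyMeasurable_mk.measurable).max measurable_const
  have hg₁nn : ∀ x, 0 ≤ g₁ x := fun x => le_max_right _ _
  have hg'g₁ : g' =ᵐ[volume] g₁ := by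
    filter_upwards [hg'sm.ae_eq_mk] with x hx
    have : g₁ x = max (hg'sm.mk g' x) 0 := rfl
    rw [this, ← hx, max_eq_left (hg'nn x)]
  have hf₁int : ∀ a b : ℝ, IntegrableOn f₁ (Ioc a b) volume := fun a b =>
    ((hf'li.integrableOn_isCompact isCompact_Icc).mono_set Ioc_subset_Icc_self).congr_fun_ae
      (ae_restrict_of_ae hf'f₁)
  have hfFTC₁ : ∀ a b : ℝ, a < b → f b - f a = ∫ t in a..b, f₁ t := by
    intro a b hab
    rw [hfFTC a b hab]
    exact intervalIntegral.integral_congr_ae (by filter_upwards [hf'f₁] with x hx _; exact hx)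
  have cov : ∀ {k : ℝ → ℝ≥0∞}, Measurable k → ∀ {S : Set ℝ}, MeasurableSet S →
      ∫⁻ t in S, ENNReal.ofReal (f₁ t) * k (f t) = ∫⁻ y in f '' S, k y :=
    fun hk _ hS => SQSAux.cov_lintegral hfm hfs hf₁meas hf₁nn hf₁int hfFTC₁ hk hS
  -- the measurable representative of the composed density
  set ρ₁ : ℝ → ℝ := fun x => g₁ (f x) * f₁ x with hρ₁def
  have hρ₁meas : Measurable ρ₁ := (hg₁meas.comp hfmeas).mul hf₁meas
  have hρ₁nn : ∀ x, 0 ≤ ρ₁ x := fun x => mul_nonneg (hg₁nn _) (hf₁nn _)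
  have hρae : (fun x => g' (f x) * f' x) =ᵐ[volume] ρ₁ := by
    obtain ⟨N, hEN, hNm, hN0⟩ := exists_measurable_superset_of_null (ae_iff.mp hg'g₁)
    have hBm : MeasurableSet (f ⁻¹' N) := hfmeas hNm
    have h0 : ∫⁻ t in f ⁻¹' N, ENNReal.ofReal (f₁ t) = 0 := by
      have h1 := cov (measurable_const : Measurable (fun _ : ℝ => (1:ℝ≥0∞))) hBm
      simp only [mul_one] at h1
      rw [h1, Set.image_preimage_eq N hfs, setLIntegral_one, hN0]
    have h2 : ∀ᵐ t ∂(volume : Measure ℝ), t ∈ f ⁻¹' N → f₁ t = 0 := by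
      have h3 := (lintegral_eq_zero_iff hf₁meas.ennreal_ofReal).mp h0
      have h4 : ∀ᵐ t ∂(volume : Measure ℝ).restrict (f ⁻¹' N), f₁ t = 0 := by
        filter_upwards [h3] with t ht
        exact le_antisymm (ENNReal.ofReal_eq_zero.mp ht) (hf₁nn t)
      exact (ae_restrict_iff' hBm).mp h4
    filter_upwards [hf'f₁, h2] with t h1 h2'
    by_cases htB : t ∈ f ⁻¹' N
    · have hz : f₁ t = 0 := h2' htB
      show g' (f t) * f' t = g₁ (f t) * f₁ t
      rw [h1, hz, mul_zero, mul_zero]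
    · have hgg : g' (f t) = g₁ (f t) := by
        by_contra hne
        exact htB (hEN hne)
      show g' (f t) * f' t = g₁ (f t) * f₁ t
      rw [hgg, h1]
  have I1 : ∀ a b : ℝ, ∫⁻ x in Ioc a b, ENNReal.ofReal (ρ₁ x)
      = ∫⁻ y in Ioc (f a) (f b), ENNReal.ofReal (g₁ y) := by
    intro a b
    have h1 := cov hg₁meas.ennreal_ofReal (measurableSet_Ioc (a := a) (b := b))
    rw [SQSAux.f_image_Ioc hfm hfs] at h1
    rw [← h1]
    refine lintegral_congr fun x => ?_
    have : ρ₁ x = g₁ (f x) * f₁ x := rfl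
    rw [this, ENNReal.ofReal_mul (hg₁nn _), mul_comm]
  have hρ₁int : ∀ a b : ℝ, IntegrableOn ρ₁ (Ioc a b) volume := fun a b =>
    SQSAux.integrableOn_Ioc_of_lint hρ₁meas hρ₁nn (by
      rw [I1 a b]; exact SQSAux.lint_Ioc_lt_top hg'li hg'g₁ hg₁nn _ _)
  have hliρ : LocallyIntegrable (fun x => g' (f x) * f' x) volume :=
    SQSAux.locallyIntegrable_of_integrableOn_Ioc hρae hρ₁int
  have key_int : ∀ a b : ℝ, a < b →
      ∫ x in a..b, (g' (f x) * f' x) = ∫ y in f a..f b, g' y := by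
    intro a b hab
    have hM : f a < f b := hfm hab
    calc ∫ x in a..b, (g' (f x) * f' x) = ∫ x in a..b, ρ₁ x :=
          intervalIntegral.integral_congr_ae
            (by filter_upwards [hρae] with x hx _; exact hx)
      _ = (∫⁻ x in Ioc a b, ENNReal.ofReal (ρ₁ x)).toReal :=
          SQSAux.interval_eq_toReal hρ₁nn hρ₁meas.aestronglyMeasurable hab.le
      _ = (∫⁻ y in Ioc (f a) (f b), ENNReal.ofReal (g₁ y)).toReal := by rw [I1 a b]
      _ = ∫ y in f a..f b, g₁ y :=
          (SQSAux.interval_eq_toReal hg₁nn hg₁meas.aestronglyMeasurable hM.le).symm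
      _ = ∫ y in f a..f b, g' y :=
          intervalIntegral.integral_congr_ae
            (by filter_upwards [hg'g₁] with x hx _; exact hx.symm)
  -- the σ side
  set GG : ℝ → ℝ := fun y => (1 / g₁ y) ^ sg with hGGdef
  set B₁ : ℝ → ℝ := fun x => (1 / f₁ x) ^ sf with hB₁def
  have hGGmeas : Measurable GG :=
    (Real.continuous_rpow_const hsg.le).measurable.comp (measurable_const.div hg₁meas)
  have hB₁meas : Measurable B₁ :=
    (Real.continuous_rpow_const hsf.le).measurable.comp (measurable_const.div hf₁meas)
  have hGGnn : ∀ x, 0 ≤ GG x := fun x => Real.rpow_nonneg (by positivity) _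
  have hB₁nn : ∀ x, 0 ≤ B₁ x := fun x => Real.rpow_nonneg (by positivity) _
  have hGGae : (fun y => (1 / g' y) ^ sg) =ᵐ[volume] GG := by
    filter_upwards [hg'g₁] with y hy
    have : GG y = (1 / g₁ y) ^ sg := rfl
    rw [this, hy]
  have hB₁ae : (fun x => (1 / f' x) ^ sf) =ᵐ[volume] B₁ := by
    filter_upwards [hf'f₁] with x hx
    have : B₁ x = (1 / f₁ x) ^ sf := rfl
    rw [this, hx]
  set σ₁ : ℝ → ℝ := fun x => (1 / ρ₁ x) ^ s with hσ₁def
  have hσ₁meas : Measurable σ₁ :=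
    (Real.continuous_rpow_const hspos.le).measurable.comp (measurable_const.div hρ₁meas)
  have hσ₁nn : ∀ x, 0 ≤ σ₁ x := fun x => Real.rpow_nonneg (by positivity) _
  have hσae : (fun x => (1 / (g' (f x) * f' x)) ^ s) =ᵐ[volume] σ₁ := by
    filter_upwards [hρae] with x hx
    have : σ₁ x = (1 / ρ₁ x) ^ s := rfl
    rw [this, ← hx]
  have hpt : ∀ x, ENNReal.ofReal (σ₁ x)
      = (ENNReal.ofReal (GG (f x) * f₁ x)) ^ (s / sg)
        * (ENNReal.ofReal (B₁ x)) ^ (1 - s / sg) := by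
    intro x
    have h1 : σ₁ x = ((1 / g₁ (f x)) ^ sg * f₁ x) ^ (s / sg)
        * ((1 / f₁ x) ^ sf) ^ (1 - s / sg) :=
      SQSAux.keyid hsf hsg hss _ _ (hg₁nn _) (hf₁nn _)
    have h2 : GG (f x) * f₁ x = (1 / g₁ (f x)) ^ sg * f₁ x := rfl
    have h3 : B₁ x = (1 / f₁ x) ^ sf := rfl
    rw [h1, h2, h3, ENNReal.ofReal_mul (Real.rpow_nonneg (by positivity) _),
      ← ENNReal.ofReal_rpow_of_nonneg (by positivity) hasg.le,
      ← ENNReal.ofReal_rpow_of_nonneg (Real.rpow_nonneg (by positivity) _) (by linarith)]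
  have Hold : ∀ a b : ℝ, ∫⁻ x in Ioc a b, ENNReal.ofReal (σ₁ x)
      ≤ (∫⁻ y in Ioc (f a) (f b), ENNReal.ofReal (GG y)) ^ (s / sg)
        * (∫⁻ x in Ioc a b, ENNReal.ofReal (B₁ x)) ^ (1 - s / sg) := by
    intro a b
    have I2 : ∫⁻ x in Ioc a b, ENNReal.ofReal (GG (f x) * f₁ x)
        = ∫⁻ y in Ioc (f a) (f b), ENNReal.ofReal (GG y) := by
      have h1 := cov hGGmeas.ennreal_ofReal (measurableSet_Ioc (a := a) (b := b))
      rw [SQSAux.f_image_Ioc hfm hfs] at h1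
      rw [← h1]
      refine lintegral_congr fun x => ?_
      rw [ENNReal.ofReal_mul (hGGnn _), mul_comm]
    calc ∫⁻ x in Ioc a b, ENNReal.ofReal (σ₁ x)
        = ∫⁻ x in Ioc a b, (ENNReal.ofReal (GG (f x) * f₁ x)) ^ (s / sg)
            * (ENNReal.ofReal (B₁ x)) ^ (1 - s / sg) := lintegral_congr fun x => hpt x
      _ ≤ (∫⁻ x in Ioc a b, ENNReal.ofReal (GG (f x) * f₁ x)) ^ (s / sg)
            * (∫⁻ x in Ioc a b, ENNReal.ofReal (B₁ x)) ^ (1 - s / sg) :=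
          SQSAux.holder_bound _
            (((hGGmeas.comp hfmeas).mul hf₁meas).ennreal_ofReal).aemeasurable
            (hB₁meas.ennreal_ofReal).aemeasurable hasg hslt
      _ = (∫⁻ y in Ioc (f a) (f b), ENNReal.ofReal (GG y)) ^ (s / sg)
            * (∫⁻ x in Ioc a b, ENNReal.ofReal (B₁ x)) ^ (1 - s / sg) := by rw [I2]
  have hGGfin : ∀ a b : ℝ, ∫⁻ y in Ioc a b, ENNReal.ofReal (GG y) < ⊤ := fun a b =>
    SQSAux.lint_Ioc_lt_top hgσli hGGae hGGnn a b
  have hB₁fin : ∀ a b : ℝ, ∫⁻ x in Ioc a b, ENNReal.ofReal (B₁ x) < ⊤ := fun a b =>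
    SQSAux.lint_Ioc_lt_top hfσli hB₁ae hB₁nn a b
  have hσ₁int : ∀ a b : ℝ, IntegrableOn σ₁ (Ioc a b) volume := by
    intro a b
    refine SQSAux.integrableOn_Ioc_of_lint hσ₁meas hσ₁nn (lt_of_le_of_lt (Hold a b) ?_)
    exact ENNReal.mul_lt_top
      (ENNReal.rpow_lt_top_of_nonneg hasg.le (hGGfin _ _).ne)
      (ENNReal.rpow_lt_top_of_nonneg (by linarith) (hB₁fin _ _).ne)
  have hliσ : LocallyIntegrable (fun x => (1 / (g' (f x) * f' x)) ^ s) volume :=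
    SQSAux.locallyIntegrable_of_integrableOn_Ioc hσae hσ₁int
  -- assemble
  refine ⟨hgm.comp hfm, hgs.comp hfs, ⟨hliρ, ?_⟩, p, hp1,
    fun x => mul_nonneg (hg'nn _) (hf'nn _), hliρ, ?_, Cg * Cf ^ (1 + 1 / sg), ?_, ?_⟩
  · -- FTC for the composition
    intro a b hab
    show g (f b) - g (f a) = ∫ t in a..b, (g' (f t) * f' t)
    rw [key_int a b hab]
    exact hgFTC _ _ (hfm hab)
  · -- local integrability of the dual density
    show LocallyIntegrable (fun x => (1 / (g' (f x) * f' x)) ^ (1 / (p - 1))) volume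
    simpa only [hps] using hliσ
  · -- the constant is at least 1
    have h1 : (1:ℝ) ≤ Cf ^ (1 + 1 / sg) := by
      have h2 := Real.rpow_le_rpow zero_le_one hCf (by positivity : (0:ℝ) ≤ 1 + 1/sg)
      rwa [Real.one_rpow] at h2
    nlinarith
  · -- the A_p inequality
    intro a b hab
    have hM : f a < f b := hfm hab
    have hL : (0:ℝ) < b - a := by linarith
    have hM' : (0:ℝ) < f b - f a := by linarith
    show ((b - a)⁻¹ * ∫ x in a..b, (g' (f x) * f' x))
        * ((b - a)⁻¹ * ∫ x in a..b, (1 / (g' (f x) * f' x)) ^ (1 / (p - 1))) ^ (p - 1)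
        ≤ Cg * Cf ^ (1 + 1 / sg)
    rw [hps, hp1']
    -- real-valued interval integrals
    have hy1E : ∫ y in f a..f b, (1 / g' y) ^ sg
        = (∫⁻ y in Ioc (f a) (f b), ENNReal.ofReal (GG y)).toReal := by
      rw [show ∫ y in f a..f b, (1 / g' y) ^ sg = ∫ y in f a..f b, GG y from
        intervalIntegral.integral_congr_ae
          (by filter_upwards [hGGae] with y hy _; exact hy)]
      exact SQSAux.interval_eq_toReal hGGnn hGGmeas.aestronglyMeasurable hM.le
    have hy2E : ∫ x in a..b, (1 / f' x) ^ sf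
        = (∫⁻ x in Ioc a b, ENNReal.ofReal (B₁ x)).toReal := by
      rw [show ∫ x in a..b, (1 / f' x) ^ sf = ∫ x in a..b, B₁ x from
        intervalIntegral.integral_congr_ae
          (by filter_upwards [hB₁ae] with x hx _; exact hx)]
      exact SQSAux.interval_eq_toReal hB₁nn hB₁meas.aestronglyMeasurable hab.le
    have hSigE : ∫ x in a..b, (1 / (g' (f x) * f' x)) ^ s
        = (∫⁻ x in Ioc a b, ENNReal.ofReal (σ₁ x)).toReal := by
      rw [show ∫ x in a..b, (1 / (g' (f x) * f' x)) ^ s = ∫ x in a..b, σ₁ x from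
        intervalIntegral.integral_congr_ae
          (by filter_upwards [hσae] with x hx _; exact hx)]
      exact SQSAux.interval_eq_toReal hσ₁nn hσ₁meas.aestronglyMeasurable hab.le
    have hSigle : ∫ x in a..b, (1 / (g' (f x) * f' x)) ^ s
        ≤ (∫ y in f a..f b, (1 / g' y) ^ sg) ^ (s / sg)
          * (∫ x in a..b, (1 / f' x) ^ sf) ^ (1 - s / sg) := by
      rw [hSigE, hy1E, hy2E, ENNReal.toReal_rpow, ENNReal.toReal_rpow,
        ← ENNReal.toReal_mul]
      exact ENNReal.toReal_mono
        (ENNReal.mul_ne_top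
          (ENNReal.rpow_ne_top_of_nonneg hasg.le (hGGfin _ _).ne)
          (ENNReal.rpow_ne_top_of_nonneg (by linarith) (hB₁fin _ _).ne))
        (Hold a b)
    have hx1nn : 0 ≤ ∫ x in a..b, (g' (f x) * f' x) :=
      intervalIntegral.integral_nonneg hab.le
        (fun x _ => mul_nonneg (hg'nn _) (hf'nn _))
    have hy1nn : 0 ≤ ∫ y in f a..f b, (1 / g' y) ^ sg :=
      intervalIntegral.integral_nonneg hM.le
        (fun y _ => Real.rpow_nonneg (one_div_nonneg.mpr (hg'nn _)) _)
    have hy2nn : 0 ≤ ∫ x in a..b, (1 / f' x) ^ sf :=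
      intervalIntegral.integral_nonneg hab.le
        (fun x _ => Real.rpow_nonneg (one_div_nonneg.mpr (hf'nn _)) _)
    have hSig0 : 0 ≤ ∫ x in a..b, (1 / (g' (f x) * f' x)) ^ s :=
      intervalIntegral.integral_nonneg hab.le
        (fun x _ => Real.rpow_nonneg
          (one_div_nonneg.mpr (mul_nonneg (hg'nn _) (hf'nn _))) _)
    have Hg0 := hAg (f a) (f b) hM
    rw [hpg1', ← key_int a b hab] at Hg0
    have Hf0 := hAf a b hab
    rw [hpf1', ← hfFTC a b hab] at Hf0
    exact SQSAux.final_alg hsf hsg hss hL hM' hx1nn hy1nn hy2nn hSig0 hSigle hCf hCg Hg0 Hf0
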